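/- For a subset A of a topological space X and a point x, we have x ∈ e*-cl_θ(A) if and only if U ∩ A ≠ ∅ for every e*-regular set U containing x. -/
import Mathlib


open Set Topology

variable {X : Type*} [TopologicalSpace X]

/-- δ-closure of A. -/
def deltaCl (A : Set X) : Set X :=
  {x | ∀ U : Set X, IsOpen U → x ∈ U → (interior (closure U) ∩ A).Nonempty}

/-- A is e*-open if A ⊆ cl(int(δ-cl A)). -/
def EStarOpen (A : Set X) : Prop := A ⊆ closure (interior (deltaCl A))

/-- A is e*-closed if its complement is e*-open. -/
def EStarClosed (A : Set X) : Prop := EStarOpen Aᶜ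

/-- e*-closure: intersection of all e*-closed supersets. -/
def eStarCl (A : Set X) : Set X := ⋂₀ {F | EStarClosed F ∧ A ⊆ F}

/-- e*-interior: union of all e*-open subsets. -/
def eStarInt (A : Set X) : Set X := ⋃₀ {U | EStarOpen U ∧ U ⊆ A}

/-- e*-regular: both e*-open and e*-closed. -/
def EStarRegular (A : Set X) : Prop := EStarOpen A ∧ EStarClosed A

/-- e*-θ-closure. -/
def eStarClTheta (A : Set X) : Set X :=
  {x | ∀ U : Set X, EStarOpen U → x ∈ U → (eStarCl U ∩ A).Nonempty}

/-- e*-θ-closed. -/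
def EStarThetaClosed (A : Set X) : Prop := A = eStarClTheta A

/-- e*-θ-open. -/
def EStarThetaOpen (A : Set X) : Prop := EStarThetaClosed Aᶜ

/-- quasi e*-θ-closed. -/
def QEStarThetaClosed (A : Set X) : Prop :=
  ∀ U : Set X, EStarThetaOpen U → A ⊆ U → eStarClTheta A ⊆ U

/-- e*-θ-kernel. -/
def eStarKerTheta (A : Set X) : Set X := ⋂₀ {U | EStarThetaOpen U ∧ A ⊆ U}


lemma deltaCl_mono {A B : Set X} (h : A ⊆ B) : deltaCl A ⊆ deltaCl B := by
  intro x hx U hU hxU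
  obtain ⟨y, hy1, hy2⟩ := hx U hU hxU
  exact ⟨y, hy1, h hy2⟩

lemma subset_deltaCl (A : Set X) : A ⊆ deltaCl A := by
  intro x hx U hU hxU
  exact ⟨x, interior_maximal subset_closure hU hxU, hx⟩

lemma IsOpen.eStarOpen {A : Set X} (h : IsOpen A) : EStarOpen A := by
  intro x hx
  exact subset_closure (interior_maximal (subset_deltaCl A) h hx)

lemma eStarOpen_sUnion {S : Set (Set X)} (h : ∀ U ∈ S, EStarOpen U) :
    EStarOpen (⋃₀ S) := by
  intro x hx
  obtain ⟨U, hU, hxU⟩ := hx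
  exact closure_mono (interior_mono (deltaCl_mono (subset_sUnion_of_mem hU))) (h U hU hxU)

lemma eStarClosed_eStarCl (A : Set X) : EStarClosed (eStarCl A) := by
  unfold EStarClosed eStarCl
  rw [Set.compl_sInter]
  exact eStarOpen_sUnion (by rintro U ⟨F, ⟨hF, _⟩, rfl⟩; exact hF)

lemma subset_eStarCl (A : Set X) : A ⊆ eStarCl A :=
  fun x hx => fun F hF => hF.2 hx

lemma eStarCl_subset {A F : Set X} (hF : EStarClosed F) (h : A ⊆ F) : eStarCl A ⊆ F :=
  fun x hx => hx F ⟨hF, h⟩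

lemma eStarOpen_eStarCl {U : Set X} (hU : EStarOpen U) : EStarOpen (eStarCl U) := by
  have hCc : EStarClosed (closure (interior (deltaCl U))) := by
    unfold EStarClosed
    exact (isClosed_closure.isOpen_compl).eStarOpen
  intro x hx
  have : x ∈ closure (interior (deltaCl U)) := eStarCl_subset hCc hU hx
  exact closure_mono (interior_mono (deltaCl_mono (subset_eStarCl U))) this

theorem stmt13 (A : Set X) (x : X) :
    x ∈ eStarClTheta A ↔ ∀ U : Set X, EStarRegular U → x ∈ U → (U ∩ A).Nonempty := by
  constructor
  · intro hx U ⟨hUo, hUc⟩ hxU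
    have := hx U hUo hxU
    have hcl : eStarCl U = U := Subset.antisymm (eStarCl_subset hUc subset_rfl) (subset_eStarCl U)
    rwa [hcl] at this
  · intro h U hUo hxU
    exact h (eStarCl U) ⟨eStarOpen_eStarCl hUo, eStarClosed_eStarCl U⟩ (subset_eStarCl U hxU)
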